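/- Let F(a,b) be the free group on two generators and Γ = F(a,b) *_{⟨c⟩} H an amalgamated product where c = [a,b] and H is any group containing an element identified with c. Then for m = 2n ≥ 2, the elements W_σ = a b^{σ(1)} a ⋯ a b^{σ(m)} a (σ ∈ S_m) are pairwise non-conjugate in Γ. -/

import Mathlib

/-- The two-element family `{F(a,b), H}` to be amalgamated. -/
def AmalgamFam (H : Type) : Bool → Type
  | true => FreeGroup (Fin 2)
  | false => H

instance (H : Type) [Group H] : ∀ i, Group (AmalgamFam H i)
  | true => inferInstanceAs (Group (FreeGroup (Fin 2)))
  | false => ‹Group H›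

/-- The commutator `c = [a,b]` in `F(a,b)`. -/
def commAB : FreeGroup (Fin 2) :=
  FreeGroup.of 0 * FreeGroup.of 1 * (FreeGroup.of 0)⁻¹ * (FreeGroup.of 1)⁻¹

/-- The amalgamating maps `⟨c⟩ → F(a,b)` and `⟨c⟩ → H`. -/
def amalgamMaps (H : Type) [Group H] (f : (Subgroup.zpowers commAB) →* H) :
    ∀ i, (Subgroup.zpowers commAB) →* AmalgamFam H i
  | true => (Subgroup.zpowers commAB).subtype
  | false => f


open Monoid PushoutI

namespace AmalgamConj

variable {ι : Type*} {G : ι → Type*} [∀ i, Group (G i)] {H : Type*} [Group H]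
  {φ : ∀ i, H →* G i}

/-- Product of a list of letters in the pushout. -/
def prodP (φ : ∀ i, H →* G i) (L : List (Σ i, G i)) : PushoutI φ :=
  (L.map fun p => of (φ := φ) p.1 p.2).prod

/-- A list of letters is reduced: adjacent letters in distinct factors, no letter in the
image of the base group. -/
def RedList (φ : ∀ i, H →* G i) (L : List (Σ i, G i)) : Prop :=
  L.Chain' (fun a b => a.1 ≠ b.1) ∧ ∀ p ∈ L, p.2 ∉ (φ p.1).range

lemma prodP_nil : prodP φ [] = 1 := rfl

lemma prodP_cons (p : (Σ i, G i)) (L : List (Σ i, G i)) :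
    prodP φ (p :: L) = of (φ := φ) p.1 p.2 * prodP φ L := by
  simp [prodP]

lemma prodP_append (L₁ L₂ : List (Σ i, G i)) :
    prodP φ (L₁ ++ L₂) = prodP φ L₁ * prodP φ L₂ := by
  simp [prodP]

lemma prodP_revinv (L : List (Σ i, G i)) :
    prodP φ (L.reverse.map fun p => ⟨p.1, p.2⁻¹⟩) = (prodP φ L)⁻¹ := by
  induction L with
  | nil => simp [prodP]
  | cons p L ih =>
    rw [List.reverse_cons, List.map_append, prodP_append, ih, prodP_cons]
    simp [prodP, mul_inv_rev]

lemma ofCoprodI_word_prod (w : CoprodI.Word G) :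
    ofCoprodI (φ := φ) w.prod = prodP φ w.toList := by
  rw [CoprodI.Word.prod, map_list_prod, List.map_map, prodP]
  congr 1

lemma prodP_not_base (hφ : ∀ i, Function.Injective (φ i)) {L : List (Σ i, G i)}
    (hL : RedList φ L) (hne : L ≠ []) : prodP φ L ∉ (base φ).range := by
  intro hmem
  have hne1 : ∀ l ∈ L, Sigma.snd l ≠ 1 := by
    intro l hl h1
    exact hL.2 l hl ⟨1, by simp [h1]⟩
  set w : CoprodI.Word G := ⟨L, hne1, hL.1⟩ with hwdef
  have hred : Reduced φ w := fun p hp => hL.2 p hp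
  have := hred.eq_empty_of_mem_range hφ (by rwa [ofCoprodI_word_prod])
  apply hne
  have : w.toList = ([] : List (Σ i, G i)) := by rw [this]; rfl
  exact this

lemma prodP_ne_of (hφ : ∀ i, Function.Injective (φ i)) {t : ι} {M : List (Σ i, G i)}
    (hM : RedList φ M) (hne : M ≠ [])
    (hlast : ∀ p ∈ M.getLast?, Sigma.fst p ≠ t) (v : G t) :
    prodP φ M ≠ of (φ := φ) t v := by
  intro heq
  have hM' : RedList φ (M ++ [⟨t, v⁻¹⟩]) := by
    constructor
    · unfold List.Chain'
      rw [List.isChain_append]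
      refine ⟨hM.1, List.isChain_singleton _, ?_⟩
      intro x hx y hy
      simp only [List.head?_cons, Option.mem_some_iff] at hy
      subst hy
      exact hlast x hx
    · intro p hp
      rcases List.mem_append.1 hp with hp | hp
      · exact hM.2 p hp
      · simp only [List.mem_singleton] at hp
        subst hp
        intro hr
        have hv : v ∉ (φ t).range := by
          rintro ⟨h, rfl⟩
          exact prodP_not_base hφ hM hne
            (heq ▸ (of_apply_eq_base φ t h ▸ MonoidHom.mem_range.2 ⟨h, rfl⟩))
        exact hv ((inv_mem_iff (x := v)).1 hr)
  have hone : prodP φ (M ++ [⟨t, v⁻¹⟩]) = 1 := by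
    rw [prodP_append, heq, prodP_cons, prodP_nil, mul_one, map_inv, mul_inv_cancel]
  exact prodP_not_base hφ hM' (by simp) (hone ▸ one_mem _)


lemma sandwich (hφ : ∀ i, Function.Injective (φ i)) {t : ι} {L₀ : List (Σ i, G i)}
    (hL₀ : RedList φ L₀) (hne : L₀ ≠ [])
    (hhead : ∀ p ∈ L₀.head?, Sigma.fst p ≠ t) (hlast : ∀ p ∈ L₀.getLast?, Sigma.fst p ≠ t)
    {x : G t} (hx : x ∉ (φ t).range) (v : G t) :
    prodP φ L₀ * of (φ := φ) t x * (prodP φ L₀)⁻¹ ≠ of (φ := φ) t v := by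
  intro heq
  have hrevne : (L₀.reverse.map fun p => (⟨p.1, p.2⁻¹⟩ : Σ i, G i)) ≠ [] := by
    simpa using hne
  have hMred : RedList φ (L₀ ++ ⟨t, x⟩ :: (L₀.reverse.map fun p => ⟨p.1, p.2⁻¹⟩)) := by
    constructor
    · unfold List.Chain'
      rw [List.isChain_append]
      refine ⟨hL₀.1, ?_, ?_⟩
      · rw [List.isChain_cons]
        constructor
        · intro y hy
          simp only [List.map_reverse, List.head?_reverse, List.getLast?_map,
            Option.mem_def, Option.map_eq_some_iff] at hy
          rcases hy with ⟨z, hz, rfl⟩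
          exact fun hh => hlast z hz hh.symm
        · rw [List.map_reverse, List.isChain_reverse, List.isChain_map]
          exact List.IsChain.imp (fun a b h => Ne.symm h) hL₀.1
      · intro p hp y hy
        simp only [List.head?_cons, Option.mem_some_iff] at hy
        subst hy
        exact hlast p hp
    · intro p hp
      rw [List.mem_append, List.mem_cons] at hp
      rcases hp with hp | rfl | hp
      · exact hL₀.2 p hp
      · exact hx
      · rw [List.mem_map] at hp
        rcases hp with ⟨z, hz, rfl⟩
        rw [List.mem_reverse] at hz
        exact fun hr => hL₀.2 z hz ((inv_mem_iff (x := z.2)).1 hr)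
  refine prodP_ne_of hφ hMred (by simp) ?_ v ?_
  · intro p hp
    rw [List.getLast?_append_of_ne_nil _ (List.cons_ne_nil _ _)] at hp
    have : (⟨t, x⟩ :: (L₀.reverse.map fun p => ⟨p.1, p.2⁻¹⟩) :
        List (Σ i, G i)) = [⟨t, x⟩] ++ (L₀.reverse.map fun p => ⟨p.1, p.2⁻¹⟩) := rfl
    rw [this, List.getLast?_append_of_ne_nil _ hrevne] at hp
    simp only [List.map_reverse, List.getLast?_reverse, List.head?_map,
      Option.mem_def, Option.map_eq_some_iff] at hp
    rcases hp with ⟨z, hz, rfl⟩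
    exact hhead z hz
  · rw [prodP_append, prodP_cons, prodP_revinv, ← mul_assoc]
    exact heq

lemma conj_noreturn (hφ : ∀ i, Function.Injective (φ i)) {t : ι} {L : List (Σ i, G i)}
    (hL : RedList φ L) {u : G t}
    (hu : ∀ x : G t, x * u * x⁻¹ ∉ (φ t).range) (hne : L ≠ [])
    (hhead : ∀ p ∈ L.head?, Sigma.fst p ≠ t) (v : G t) :
    prodP φ L * of (φ := φ) t u * (prodP φ L)⁻¹ ≠ of (φ := φ) t v := by
  classical
  rcases List.eq_nil_or_concat L with rfl | ⟨L', p, rfl⟩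
  · exact absurd rfl hne
  rw [List.concat_eq_append] at hL hne hhead ⊢
  rcases p with ⟨j, g⟩
  by_cases hj : j = t
  · subst hj
    rcases L' with _ | ⟨q, L''⟩
    · exact absurd rfl (hhead ⟨j, g⟩ (by simp))
    have hq : Sigma.fst q ≠ j := hhead q (by simp)
    have hlast' : ∀ z ∈ (q :: L'').getLast?, Sigma.fst z ≠ j := by
      have hc := hL.1
      unfold List.Chain' at hc
      rw [List.isChain_append] at hc
      intro z hz
      exact hc.2.2 z hz ⟨j, g⟩ (by simp)
    have hred' : RedList φ (q :: L'') :=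
      ⟨(List.isChain_append.1 hL.1).1, fun p hp => hL.2 p (List.mem_append_left _ hp)⟩
    have heqp : prodP φ ((q :: L'') ++ [⟨j, g⟩]) = prodP φ (q :: L'') * of (φ := φ) j g := by
      rw [prodP_append]
      simp [prodP]
    intro heq
    refine sandwich hφ hred' (List.cons_ne_nil _ _) (fun p hp => hhead p (by
        rcases List.head?_eq_head (l := q :: L'') (by simp) with h'
        simp only [List.cons_append, List.head?_cons, Option.mem_some_iff] at hp ⊢
        exact hp)) hlast' (hu g) v ?_
    rw [← heq, heqp, mul_inv_rev, map_mul, map_mul, map_inv]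
    group
  · refine sandwich hφ hL hne hhead ?_ (by simpa using hu 1) v
    intro p hp
    rw [List.getLast?_concat, Option.mem_some_iff] at hp
    subst hp
    exact hj

lemma mem_set_notin_range (d : NormalWord.Transversal φ) {i : ι} {x : G i}
    (hx : x ∈ d.set i) (hx1 : x ≠ 1) : x ∉ (φ i).range := by
  rintro ⟨y, rfl⟩
  have h1 := (d.compl i).existsUnique (φ i y)
  have heq := h1.unique (y₁ := (⟨⟨φ i y, ⟨y, rfl⟩⟩, ⟨1, d.one_mem i⟩⟩))
    (y₂ := (⟨⟨1, Subgroup.one_mem _⟩, ⟨φ i y, hx⟩⟩)) (by simp) (by simp)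
  have : (1 : G i) = φ i y := congrArg (fun p => (p.2 : G i)) heq
  exact hx1 this.symm

lemma conj_in_factor (hφ : ∀ i, Function.Injective (φ i)) {t : ι} {g : PushoutI φ} {u v : G t}
    (hu : ∀ x : G t, x * u * x⁻¹ ∉ (φ t).range)
    (heq : g * of (φ := φ) t u * g⁻¹ = of (φ := φ) t v) :
    ∃ x : G t, x * u * x⁻¹ = v := by
  classical
  obtain ⟨d⟩ := NormalWord.transversal_nonempty φ hφ
  obtain ⟨w, rfl⟩ : ∃ w : NormalWord d, w.prod = g :=
    ⟨NormalWord.equiv g, NormalWord.equiv.symm_apply_apply g⟩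
  have hLred : RedList φ w.toList :=
    ⟨w.chain_ne, fun p hp =>
      mem_set_notin_range d (w.normalized p.1 p.2 (by cases p; exact hp)) (w.ne_one p hp)⟩
  have hgprod : w.prod = base φ w.head * prodP φ w.toList := by
    rw [NormalWord.prod, ofCoprodI_word_prod]
  have heq2 : prodP φ w.toList * of (φ := φ) t u * (prodP φ w.toList)⁻¹
      = of (φ := φ) t ((φ t w.head)⁻¹ * v * φ t w.head) := by
    have hbase : of (φ := φ) t ((φ t w.head)⁻¹ * v * φ t w.head)
        = (base φ w.head)⁻¹ * of (φ := φ) t v * base φ w.head := by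
      rw [map_mul, map_mul, map_inv, of_apply_eq_base]
    rw [hbase, ← heq, hgprod]
    group
  rcases hL : w.toList with _ | ⟨⟨i, g₁⟩, L₂⟩
  · rw [hL, prodP_nil, one_mul, inv_one, mul_one] at heq2
    have := of_injective hφ t heq2
    exact ⟨φ t w.head, by rw [this]; group⟩
  · rw [hL] at heq2 hLred
    by_cases hi : i = t
    · subst hi
      have heq3 : prodP φ L₂ * of (φ := φ) i u * (prodP φ L₂)⁻¹
          = of (φ := φ) i (g₁⁻¹ * ((φ i w.head)⁻¹ * v * φ i w.head) * g₁) := by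
        rw [prodP_cons] at heq2
        rw [map_mul, map_mul, map_inv]
        rw [← heq2]
        group
      rcases L₂ with _ | ⟨q, L₃⟩
      · rw [prodP_nil, one_mul, inv_one, mul_one] at heq3
        have := of_injective hφ i heq3
        refine ⟨φ i w.head * g₁, ?_⟩
        rw [this]
        group
      · have hq : Sigma.fst q ≠ i :=
          (List.isChain_cons_cons.1 hLred.1).1.symm
        have hred' : RedList φ (q :: L₃) :=
          ⟨hLred.1.tail, fun p hp => hLred.2 p (List.mem_cons_of_mem _ hp)⟩
        exact absurd heq3 (conj_noreturn hφ hred' hu (List.cons_ne_nil _ _)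
          (fun p hp => by
            simp only [List.head?_cons, Option.mem_some_iff] at hp
            subst hp; exact hq) _)
    · exact absurd heq2 (conj_noreturn hφ hLred hu (List.cons_ne_nil _ _)
        (fun p hp => by
          simp only [List.head?_cons, Option.mem_some_iff] at hp
          subst hp; exact hi) _)

end AmalgamConj


/-- The lamplighter-type group `ℤ ≀ ℤ` implemented on `(ℤ →₀ ℤ) × ℤ`. -/
structure Lamp : Type where
  f : ℤ →₀ ℤ
  s : ℤ

namespace Lamp

/-- shift of the lamp configuration -/
noncomputable def sh (s : ℤ) (g : ℤ →₀ ℤ) : ℤ →₀ ℤ := Finsupp.mapDomain (· + s) g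

lemma sh_add (s : ℤ) (g h : ℤ →₀ ℤ) : sh s (g + h) = sh s g + sh s h :=
  Finsupp.mapDomain_add

lemma sh_zero_right (s : ℤ) : sh s 0 = 0 := Finsupp.mapDomain_zero

lemma sh_zero (g : ℤ →₀ ℤ) : sh 0 g = g := by
  have : ((· + (0 : ℤ)) : ℤ → ℤ) = id := by funext x; simp
  rw [sh, this, Finsupp.mapDomain_id]

lemma sh_sh (s r : ℤ) (g : ℤ →₀ ℤ) : sh s (sh r g) = sh (r + s) g := by
  rw [sh, sh, sh, ← Finsupp.mapDomain_comp]
  congr 1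
  funext x
  simp [add_assoc]

lemma sh_single (s x v : ℤ) : sh s (Finsupp.single x v) = Finsupp.single (x + s) v :=
  Finsupp.mapDomain_single

lemma sh_sum {β : Type*} (s : ℤ) (t : Finset β) (g : β → (ℤ →₀ ℤ)) :
    sh s (∑ i ∈ t, g i) = ∑ i ∈ t, sh s (g i) :=
  map_sum (Finsupp.mapDomain.addMonoidHom (· + s)) g t

noncomputable instance : Mul Lamp := ⟨fun x y => ⟨x.f + sh x.s y.f, x.s + y.s⟩⟩
noncomputable instance : One Lamp := ⟨⟨0, 0⟩⟩
noncomputable instance : Inv Lamp := ⟨fun x => ⟨-(sh (-x.s) x.f), -x.s⟩⟩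

lemma mul_def (f₁ f₂ : ℤ →₀ ℤ) (s₁ s₂ : ℤ) :
    (⟨f₁, s₁⟩ * ⟨f₂, s₂⟩ : Lamp) = ⟨f₁ + sh s₁ f₂, s₁ + s₂⟩ := rfl

lemma one_def : (1 : Lamp) = ⟨0, 0⟩ := rfl

noncomputable instance : Group Lamp where
  mul_assoc := by
    rintro ⟨f₁, s₁⟩ ⟨f₂, s₂⟩ ⟨f₃, s₃⟩
    simp only [mul_def, Lamp.mk.injEq]
    constructor
    · rw [sh_add, sh_sh, add_comm s₂ s₁, add_assoc]
    · rw [add_assoc]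
  one_mul := by
    rintro ⟨f, s⟩
    simp only [one_def, mul_def, sh_zero, zero_add]
  mul_one := by
    rintro ⟨f, s⟩
    simp only [one_def, mul_def, sh_zero_right, add_zero]
  inv_mul_cancel := by
    rintro ⟨f, s⟩
    show (⟨-(sh (-s) f), -s⟩ * ⟨f, s⟩ : Lamp) = 1
    rw [mul_def, one_def]
    simp

end Lamp

namespace Lamp

/-- image of the generator a -/
noncomputable def A : Lamp := ⟨0, 1⟩
/-- image of the generator b -/
noncomputable def B : Lamp := ⟨Finsupp.single 0 1, 0⟩

/-- The homomorphism from the free group to the lamplighter group. -/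
noncomputable def psi : FreeGroup (Fin 2) →* Lamp :=
  FreeGroup.lift (fun i => if i = 0 then A else B)

lemma psi_a : psi (FreeGroup.of 0) = A := by simp [psi]

lemma psi_b : psi (FreeGroup.of 1) = B := by
  rw [psi, FreeGroup.lift_apply_of]
  norm_num

lemma B_pow (k : ℕ) : B ^ k = ⟨Finsupp.single 0 (k : ℤ), 0⟩ := by
  induction k with
  | zero => simp [one_def, B]
  | succ k ih =>
    rw [pow_succ, ih, B, mul_def, sh_zero]
    have : Finsupp.single (0 : ℤ) (k : ℤ) + Finsupp.single 0 1
        = Finsupp.single (0 : ℤ) ((k + 1 : ℕ) : ℤ) := by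
      rw [← Finsupp.single_add]
      push_cast
      ring_nf
    rw [this]
    norm_num

lemma ofFn_prod (m : ℕ) (k : Fin m → ℤ) :
    (List.ofFn fun i => (⟨Finsupp.single 0 (k i), 1⟩ : Lamp)).prod
      = ⟨∑ i : Fin m, Finsupp.single ((i : ℕ) : ℤ) (k i), (m : ℤ)⟩ := by
  induction m with
  | zero => simp [one_def]
  | succ m ih =>
    rw [List.ofFn_succ, List.prod_cons, ih (fun i => k i.succ), mul_def, sh_sum]
    have h1 : ∀ x : Fin m, sh 1 (Finsupp.single ((x : ℕ) : ℤ) (k x.succ))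
        = Finsupp.single (((x.succ : Fin (m + 1)) : ℕ) : ℤ) (k x.succ) := by
      intro x
      rw [sh_single, Fin.val_succ]
      push_cast
      ring_nf
    simp only [h1]
    rw [Fin.sum_univ_succ (f := fun i : Fin (m + 1) =>
      Finsupp.single ((i : ℕ) : ℤ) (k i))]
    congr 1
    push_cast
    ring

lemma psi_W (m : ℕ) (k : Fin m → ℕ) :
    psi (FreeGroup.of 0 *
        (List.ofFn fun i => FreeGroup.of 1 ^ (k i) * FreeGroup.of 0).prod)
      = ⟨∑ i : Fin m, Finsupp.single (((i : ℕ) : ℤ) + 1) ((k i : ℕ) : ℤ),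
          1 + (m : ℤ)⟩ := by
  rw [map_mul, map_list_prod, List.map_ofFn]
  have hcomp : (psi ∘ fun i => FreeGroup.of 1 ^ (k i) * FreeGroup.of 0)
      = fun i => (⟨Finsupp.single 0 ((k i : ℕ) : ℤ), 1⟩ : Lamp) := by
    funext i
    simp only [Function.comp_apply, map_mul, map_pow, psi_a, psi_b, B_pow, A, mul_def,
      sh_zero_right, add_zero, zero_add]
  rw [hcomp, ofFn_prod m (fun i => ((k i : ℕ) : ℤ)), psi_a, A, mul_def, sh_sum, zero_add]
  congr 1
  refine Finset.sum_congr rfl fun i _ => ?_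
  rw [sh_single]

end Lamp

namespace Lamp

noncomputable def T (m : ℕ) : (ℤ →₀ ℤ) →+ (ZMod (m + 1) →₀ ℤ) :=
  Finsupp.mapDomain.addMonoidHom (fun x : ℤ => (x : ZMod (m + 1)))

noncomputable def shz (m : ℕ) (c : ZMod (m + 1)) :
    (ZMod (m + 1) →₀ ℤ) →+ (ZMod (m + 1) →₀ ℤ) :=
  Finsupp.mapDomain.addMonoidHom (· + c)

lemma T_apply (m : ℕ) (g : ℤ →₀ ℤ) :
    T m g = Finsupp.mapDomain (fun x : ℤ => (x : ZMod (m + 1))) g := rfl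

lemma shz_apply (m : ℕ) (c : ZMod (m + 1)) (F : ZMod (m + 1) →₀ ℤ) :
    shz m c F = Finsupp.mapDomain (· + c) F := rfl

lemma T_sh (m : ℕ) (r : ℤ) (g : ℤ →₀ ℤ) :
    T m (sh r g) = shz m (r : ZMod (m + 1)) (T m g) := by
  rw [T_apply, shz_apply, T_apply, sh, ← Finsupp.mapDomain_comp, ← Finsupp.mapDomain_comp]
  congr 1
  funext x
  simp only [Function.comp_apply]
  push_cast
  ring

lemma T_single (m : ℕ) (x v : ℤ) :
    T m (Finsupp.single x v) = Finsupp.single ((x : ZMod (m + 1))) v := by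
  rw [T_apply, Finsupp.mapDomain_single]

lemma shz_zero (m : ℕ) (F : ZMod (m + 1) →₀ ℤ) : shz m 0 F = F := by
  rw [shz_apply]
  have : ((· + (0 : ZMod (m + 1))) : ZMod (m + 1) → ZMod (m + 1)) = id := by
    funext x; simp
  rw [this, Finsupp.mapDomain_id]

lemma shz_eval (m : ℕ) (c : ZMod (m + 1)) (F : ZMod (m + 1) →₀ ℤ) (y : ZMod (m + 1)) :
    shz m c F (y + c) = F y := by
  rw [shz_apply]
  exact Finsupp.mapDomain_apply (add_left_injective c) F y

/-- the point of `ZMod (m+1)` corresponding to position `i+1` -/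
def e (m : ℕ) (i : Fin m) : ZMod (m + 1) := (((i : ℕ) + 1 : ℕ) : ZMod (m + 1))

lemma e_val (m : ℕ) (i : Fin m) : (e m i).val = (i : ℕ) + 1 :=
  ZMod.val_natCast_of_lt (by omega)

lemma e_ne_zero (m : ℕ) (i : Fin m) : e m i ≠ 0 := by
  intro h
  have := congrArg ZMod.val h
  rw [e_val, ZMod.val_zero] at this
  omega

lemma e_inj (m : ℕ) {i j : Fin m} (h : e m i = e m j) : i = j := by
  have := congrArg ZMod.val h
  rw [e_val, e_val] at this
  exact Fin.ext (by omega)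

lemma e_surj (m : ℕ) {y : ZMod (m + 1)} (hy : y ≠ 0) : ∃ i : Fin m, e m i = y := by
  have hval : y.val ≠ 0 := fun h => hy ((ZMod.val_eq_zero y).1 h)
  have hlt : y.val < m + 1 := ZMod.val_lt y
  refine ⟨⟨y.val - 1, by omega⟩, ?_⟩
  have : ((y.val - 1 : ℕ) + 1 : ℕ) = y.val := by omega
  simp only [e]
  rw [this]
  have := ZMod.natCast_val (n := m + 1) (R := ZMod (m + 1)) y
  rw [this, ZMod.cast_id]

lemma sum_single_e_apply_zero (m : ℕ) (v : Fin m → ℤ) :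
    (∑ i : Fin m, Finsupp.single (e m i) (v i)) 0 = 0 := by
  rw [Finsupp.finset_sum_apply]
  refine Finset.sum_eq_zero fun i _ => ?_
  rw [Finsupp.single_apply, if_neg (e_ne_zero m i)]

lemma sum_single_e_apply (m : ℕ) (v : Fin m → ℤ) (i : Fin m) :
    (∑ j : Fin m, Finsupp.single (e m j) (v j)) (e m i) = v i := by
  rw [Finsupp.finset_sum_apply]
  rw [Finset.sum_eq_single i]
  · rw [Finsupp.single_apply, if_pos rfl]
  · intro j _ hji
    rw [Finsupp.single_apply, if_neg (fun h => hji (e_inj m h))]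
  · intro h
    exact absurd (Finset.mem_univ i) h

theorem perm_eq_of_conj (m : ℕ) (σ τ : Equiv.Perm (Fin m))
    (x : FreeGroup (Fin 2))
    (hx : x * (FreeGroup.of 0 *
        (List.ofFn fun i => FreeGroup.of 1 ^ ((σ i : ℕ) + 1) * FreeGroup.of 0).prod) * x⁻¹
        = FreeGroup.of 0 *
        (List.ofFn fun i => FreeGroup.of 1 ^ ((τ i : ℕ) + 1) * FreeGroup.of 0).prod) :
    σ = τ := by
  have h1 := congrArg psi hx
  rw [map_mul, map_mul, map_inv] at h1
  have h2 : psi x * psi (FreeGroup.of 0 *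
      (List.ofFn fun i => FreeGroup.of 1 ^ ((σ i : ℕ) + 1) * FreeGroup.of 0).prod)
      = psi (FreeGroup.of 0 *
      (List.ofFn fun i => FreeGroup.of 1 ^ ((τ i : ℕ) + 1) * FreeGroup.of 0).prod) * psi x := by
    rw [← h1]; group
  rw [psi_W m (fun i => (σ i : ℕ) + 1), psi_W m (fun i => (τ i : ℕ) + 1)] at h2
  generalize hP : psi x = P at h2
  obtain ⟨g, s⟩ := P
  rw [mul_def, mul_def, Lamp.mk.injEq] at h2
  have hf := h2.1
  -- apply T
  have hT := congrArg (T m) hf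
  rw [map_add, map_add, T_sh, T_sh] at hT
  have hm0 : ((1 + (m : ℤ) : ℤ) : ZMod (m + 1)) = 0 := by
    have : ((1 + (m : ℤ) : ℤ) : ZMod (m + 1)) = (((m + 1 : ℕ) : ℕ) : ZMod (m + 1)) := by
      push_cast; ring
    rw [this, ZMod.natCast_self]
  rw [hm0, shz_zero] at hT
  have hT2 : shz m ((s : ZMod (m + 1)))
      (T m (∑ i : Fin m, Finsupp.single (((i : ℕ) : ℤ) + 1) (((σ i : ℕ) + 1 : ℕ) : ℤ)))
      = T m (∑ i : Fin m, Finsupp.single (((i : ℕ) : ℤ) + 1) (((τ i : ℕ) + 1 : ℕ) : ℤ)) := by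
    have := hT
    rw [add_comm (T m _) (T m g)] at this
    exact add_left_cancel this
  have hTsum : ∀ (ρ : Equiv.Perm (Fin m)),
      T m (∑ i : Fin m, Finsupp.single (((i : ℕ) : ℤ) + 1) (((ρ i : ℕ) + 1 : ℕ) : ℤ))
      = ∑ i : Fin m, Finsupp.single (e m i) (((ρ i : ℕ) + 1 : ℕ) : ℤ) := by
    intro ρ
    rw [map_sum]
    refine Finset.sum_congr rfl fun i _ => ?_
    rw [T_single]
    have hcast : ((((i : ℕ) : ℤ) + 1 : ℤ) : ZMod (m + 1)) = e m i := by
      simp only [e]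
      push_cast
      ring
    rw [hcast]
  rw [hTsum σ, hTsum τ] at hT2
  -- evaluate at 0 to show s ≡ 0
  set c : ZMod (m + 1) := (s : ZMod (m + 1)) with hc
  have hc0 : c = 0 := by
    by_contra hcne
    have hish : (-c) + c = 0 := by ring
    have hev := congrArg (fun F => F (0 : ZMod (m + 1))) hT2
    rw [← hish, shz_eval] at hev
    rw [hish] at hev
    rw [sum_single_e_apply_zero] at hev
    have hnc : (-c) ≠ 0 := fun h => hcne (neg_eq_zero.1 h)
    obtain ⟨i, hi⟩ := e_surj m hnc
    rw [← hi, sum_single_e_apply] at hev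
    omega
  rw [hc0, shz_zero] at hT2
  ext i : 2
  have := congrArg (fun F => F (e m i)) hT2
  rw [sum_single_e_apply, sum_single_e_apply] at this
  have : ((σ i : ℕ) : ℤ) = ((τ i : ℕ) : ℤ) := by omega
  exact (by exact_mod_cast this : (σ i : ℕ) = (τ i : ℕ))

end Lamp

/-- In the amalgamated product `Γ = F(a,b) *_{⟨c⟩} H`, where `c = [a,b]`, the
words `W_σ = a b^{σ(1)} a ⋯ a b^{σ(m)} a` for `σ ∈ S_m`, `m = 2n ≥ 2`, are
pairwise non-conjugate. -/
theorem W_sigma_nonconjugate_in_amalgam (H : Type) [Group H]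
    (f : (Subgroup.zpowers commAB) →* H) (hf : Function.Injective f)
    (n m : ℕ) (hn : 1 ≤ n) (hm : m = 2 * n) (σ τ : Equiv.Perm (Fin m))
    (a b : FreeGroup (Fin 2)) (ha : a = FreeGroup.of 0) (hb : b = FreeGroup.of 1)
    (h : IsConj
      (Monoid.PushoutI.of (φ := amalgamMaps H f) true
        (show AmalgamFam H true from
          a * (List.ofFn fun i => b ^ ((σ i : ℕ) + 1) * a).prod))
      (Monoid.PushoutI.of (φ := amalgamMaps H f) true
        (show AmalgamFam H true from
          a * (List.ofFn fun i => b ^ ((τ i : ℕ) + 1) * a).prod))) :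
    σ = τ := by
  subst ha hb
  have hφ : ∀ i, Function.Injective ⇑(amalgamMaps H f i) := by
    intro i
    cases i
    · exact hf
    · exact Subtype.coe_injective
  rw [isConj_iff] at h
  obtain ⟨gg, hgg⟩ := h
  -- the element Wσ is not conjugate into the amalgamated subgroup
  have hu : ∀ x : AmalgamFam H true,
      x * (show AmalgamFam H true from
        FreeGroup.of 0 * (List.ofFn fun i =>
          FreeGroup.of 1 ^ ((σ i : ℕ) + 1) * FreeGroup.of 0).prod) * x⁻¹
        ∉ (amalgamMaps H f true).range := by
    intro x hmem
    obtain ⟨z, hz⟩ := hmem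
    obtain ⟨k, hk⟩ := Subgroup.mem_zpowers_iff.1 z.2
    have hzz : (amalgamMaps H f true) z = (z : FreeGroup (Fin 2)) := rfl
    rw [hzz, ← hk] at hz
    -- apply the exponent-sum-of-a homomorphism
    set α : FreeGroup (Fin 2) →* Multiplicative ℤ :=
      FreeGroup.lift (fun i => if i = 0 then Multiplicative.ofAdd (1 : ℤ) else 1) with hα
    have hαc : α commAB = 1 := by
      simp only [hα, commAB, map_mul, map_inv, FreeGroup.lift_apply_of]
      norm_num
    have hαa : α (FreeGroup.of 0) = Multiplicative.ofAdd (1 : ℤ) := by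
      simp [hα]
    have hαb : α (FreeGroup.of 1) = 1 := by
      rw [hα, FreeGroup.lift_apply_of]
      norm_num
    have hαW : α (FreeGroup.of 0 * (List.ofFn fun i =>
        FreeGroup.of 1 ^ ((σ i : ℕ) + 1) * FreeGroup.of 0).prod)
        = Multiplicative.ofAdd (1 : ℤ) * (Multiplicative.ofAdd (1 : ℤ)) ^ m := by
      rw [map_mul, hαa, map_list_prod, List.map_ofFn]
      congr 1
      have : (⇑α ∘ fun i => FreeGroup.of 1 ^ ((σ i : ℕ) + 1) * FreeGroup.of 0)
          = fun _ : Fin m => Multiplicative.ofAdd (1 : ℤ) := by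
        funext i
        simp [map_mul, map_pow, hαa, hαb]
      rw [this, List.ofFn_const, List.prod_replicate]
    have happ : α (commAB ^ k) = α ((id x : FreeGroup (Fin 2)) * (FreeGroup.of 0 * (List.ofFn fun i =>
        FreeGroup.of 1 ^ ((σ i : ℕ) + 1) * FreeGroup.of 0).prod) * (id x : FreeGroup (Fin 2))⁻¹) := congrArg α hz
    rw [map_mul, map_mul, map_inv, map_zpow, hαc, one_zpow, hαW] at happ
    have : Multiplicative.ofAdd (1 : ℤ) * (Multiplicative.ofAdd (1 : ℤ)) ^ m = 1 := by
      have hcomm : α x * (Multiplicative.ofAdd (1 : ℤ) *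
          (Multiplicative.ofAdd (1 : ℤ)) ^ m) * (α x)⁻¹
          = Multiplicative.ofAdd (1 : ℤ) * (Multiplicative.ofAdd (1 : ℤ)) ^ m := by
        rw [mul_comm (α x) _, mul_assoc, mul_inv_cancel, mul_one]
      rw [← hcomm, happ]
      rfl
    have htoadd := congrArg Multiplicative.toAdd this
    simp only [toAdd_mul, toAdd_pow, toAdd_ofAdd, toAdd_one, smul_eq_mul, nsmul_eq_mul, mul_one] at htoadd
    omega
  obtain ⟨x, hx⟩ := AmalgamConj.conj_in_factor hφ hu hgg
  exact Lamp.perm_eq_of_conj m σ τ x hx
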